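/- Let K ⊆ ℝⁿ be a compact convex set and P = {x ∈ ℝⁿ : Ax ≤ b} with A ∈ ℝ^{m×n}, b ∈ ℝ^m. Then K ∩ P = ∅ if and only if there exists λ ∈ ℝ^m with λ ≥ 0 such that min_{x ∈ K} λᵀ(Ax − b) > 0. -/

import Mathlib

open Finset

variable {E : Type*} [NormedAddCommGroup E] [NormedSpace ℝ E]

/-- The cone of nonnegative combinations of a finite family of vectors. -/
def coneSet {k : ℕ} (v : Fin k → E) : Set E :=
  {x | ∃ l : Fin k → ℝ, (∀ i, 0 ≤ l i) ∧ ∑ i, l i • v i = x}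

lemma zero_mem_coneSet {k : ℕ} (v : Fin k → E) : (0 : E) ∈ coneSet v :=
  ⟨0, fun _ => le_refl _, by simp⟩

lemma gen_mem_coneSet {k : ℕ} (v : Fin k → E) (i : Fin k) : v i ∈ coneSet v := by
  classical
  exact ⟨Pi.single i 1, fun j => by
    by_cases h : j = i <;> simp [h, Pi.single_apply], by
    simp [Pi.single_apply, Finset.sum_ite_eq']⟩

lemma coneSet_isClosed [FiniteDimensional ℝ E] :
    ∀ (k : ℕ) (v : Fin k → E), IsClosed (coneSet v) := by
  intro k
  induction k with
  | zero =>
    intro v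
    have : coneSet v = {0} := by
      ext x
      constructor
      · rintro ⟨l, -, rfl⟩; simp
      · rintro rfl; exact zero_mem_coneSet v
    rw [this]; exact isClosed_singleton
  | succ k ih =>
    intro v
    by_cases hli : LinearIndependent ℝ v
    · -- linearly independent: closed embedding image of a closed set
      set T := Fintype.linearCombination ℝ v with hT
      have hinj : Function.Injective T := by
        intro a b hab
        have h0 : T (a - b) = 0 := by rw [map_sub, hab, sub_self]
        have h1 : ∑ i, (a - b) i • v i = 0 := by
          rw [← Fintype.linearCombination_apply ℝ v]; exact h0
        have h2 := (Fintype.linearIndependent_iff.mp hli) (a - b) h1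
        funext i
        have h3 : a i - b i = 0 := h2 i
        linarith
      have hce : Topology.IsClosedEmbedding T :=
        LinearMap.isClosedEmbedding_of_injective (LinearMap.ker_eq_bot.mpr hinj)
      have hset : coneSet v = T '' {l : Fin (k+1) → ℝ | ∀ i, 0 ≤ l i} := by
        ext x
        simp only [coneSet, Set.mem_image, Set.mem_setOf_eq]
        constructor
        · rintro ⟨l, hl, rfl⟩; exact ⟨l, hl, (Fintype.linearCombination_apply ℝ v l).symm ▸ rfl⟩
        · rintro ⟨l, hl, rfl⟩; exact ⟨l, hl, (Fintype.linearCombination_apply ℝ v l).symm⟩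
      rw [hset]
      apply hce.isClosedMap
      have : {l : Fin (k+1) → ℝ | ∀ i, 0 ≤ l i} = ⋂ i, {l | 0 ≤ l i} := by
        ext l; simp
      rw [this]
      exact isClosed_iInter fun i => isClosed_le continuous_const (continuous_apply i)
    · -- dependent: union over coordinates that can be removed
      obtain ⟨g, hg0, i₀, hi₀⟩ := Fintype.not_linearIndependent_iff.mp hli
      -- pick c with some negative coordinate and ∑ c i • v i = 0
      obtain ⟨c, hc0, j₀, hj₀⟩ :
          ∃ c : Fin (k+1) → ℝ, ∑ i, c i • v i = 0 ∧ ∃ j, c j < 0 := by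
        rcases lt_trichotomy (g i₀) 0 with h | h | h
        · exact ⟨g, hg0, i₀, h⟩
        · exact absurd h hi₀
        · refine ⟨-g, by simpa using hg0, i₀, by simpa using h⟩
      have key : coneSet v =
          ⋃ j ∈ {j : Fin (k+1) | c j < 0}, coneSet (v ∘ j.succAbove) := by
        ext x
        simp only [Set.mem_iUnion, Set.mem_setOf_eq]
        constructor
        · rintro ⟨l, hl, rfl⟩
          classical
          set S : Finset (Fin (k+1)) := Finset.univ.filter (fun i => c i < 0) with hS
          have hSne : S.Nonempty := ⟨j₀, by simp [hS, hj₀]⟩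
          obtain ⟨j, hjS, hjmin⟩ := S.exists_min_image (fun i => l i / (-c i)) hSne
          have hcj : c j < 0 := by simpa [hS] using hjS
          set t : ℝ := l j / (-c j) with ht
          have htnn : 0 ≤ t := div_nonneg (hl j) (by linarith)
          set μ : Fin (k+1) → ℝ := fun i => l i + t * c i with hμ
          have hμnn : ∀ i, 0 ≤ μ i := by
            intro i
            by_cases hci : c i < 0
            · have hiS : i ∈ S := by simp [hS, hci]
              have h1 : t * (-c i) ≤ l i :=
                (le_div_iff₀ (by linarith : (0:ℝ) < -c i)).mp (hjmin i hiS)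
              simp only [hμ]; nlinarith
            · push_neg at hci
              exact add_nonneg (hl i) (mul_nonneg htnn hci)
          have hμj : μ j = 0 := by
            have hne : c j ≠ 0 := ne_of_lt hcj
            simp only [hμ, ht]
            rw [div_mul_eq_mul_div, div_neg, mul_div_cancel_right₀ _ hne]
            ring
          have hsum : ∑ i, μ i • v i = ∑ i, l i • v i := by
            simp only [hμ, add_smul, mul_smul, Finset.sum_add_distrib]
            rw [← Finset.smul_sum, hc0, smul_zero, add_zero]
          refine ⟨j, hcj, μ ∘ j.succAbove, fun i => hμnn _, ?_⟩
          rw [← hsum, Fin.sum_univ_succAbove (fun i => μ i • v i) j, hμj, zero_smul, zero_add]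
          rfl
        · rintro ⟨j, hcj, l', hl', rfl⟩
          refine ⟨Fin.insertNth (α := fun _ => ℝ) j 0 l', ?_, ?_⟩
          · intro i
            refine Fin.succAboveCases j ?_ (fun i' => ?_) i
            · simp
            · rw [Fin.insertNth_apply_succAbove]; exact hl' i'
          · rw [Fin.sum_univ_succAbove
              (fun i => Fin.insertNth (α := fun _ => ℝ) j 0 l' i • v i) j]
            simp [Fin.insertNth_apply_succAbove]
      rw [key]
      exact Set.Finite.isClosed_biUnion (Set.toFinite _)
        (fun j _ => ih (v ∘ j.succAbove))

/-- Identity inclusion of plain functions into Euclidean space. -/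
def toEuc {N : ℕ} (w : Fin N → ℝ) : EuclideanSpace ℝ (Fin N) := WithLp.toLp 2 w

@[simp] lemma toEuc_apply {N : ℕ} (w : Fin N → ℝ) (p : Fin N) : toEuc w p = w p := rfl

open scoped RealInnerProductSpace in
lemma coneSet_sep {N k : ℕ} (v : Fin k → EuclideanSpace ℝ (Fin N))
    (z : EuclideanSpace ℝ (Fin N)) (hz : z ∉ coneSet v) :
    ∃ y : EuclideanSpace ℝ (Fin N),
      (∀ i, 0 ≤ ∑ p, v i p * y p) ∧ (∑ p, z p * y p) < 0 := by
  let C : ProperCone ℝ (EuclideanSpace ℝ (Fin N)) :=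
    { carrier := coneSet v
      smul_mem' := by
        rintro a x ⟨l, hl, rfl⟩
        exact ⟨fun i => (a : ℝ) * l i, fun i => mul_nonneg a.2 (hl i), by
          simp [Finset.smul_sum, mul_smul, NNReal.smul_def]⟩
      add_mem' := by
        rintro x y ⟨l, hl, rfl⟩ ⟨l2, hl2, rfl⟩
        exact ⟨l + l2, fun i => add_nonneg (hl i) (hl2 i), by
          simp [add_smul, Finset.sum_add_distrib]⟩
      zero_mem' := zero_mem_coneSet v
      isClosed' := coneSet_isClosed _ v }
  obtain ⟨y, hy1, hy2⟩ :=
    ProperCone.hyperplane_separation' C hz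
  refine ⟨y, fun i => ?_, ?_⟩
  · have h := hy1 (v i) (gen_mem_coneSet v i)
    rw [PiLp.inner_apply] at h
    simpa [RCLike.inner_apply, mul_comm] using h
  · rw [PiLp.inner_apply] at hy2
    simpa [RCLike.inner_apply, mul_comm] using hy2

open scoped RealInnerProductSpace

/-- Generalized Farkas certificates (Lemma 2.7, first part):
for compact convex `K` and polyhedron `P = {x : Ax ≤ b}`,
`K ∩ P = ∅` iff there is `λ ≥ 0` with `λᵀ(Ax − b) > 0` for all `x ∈ K`
(equivalently, `min_{x∈K} λᵀ(Ax − b) > 0`). -/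
theorem stmt1 (n m : ℕ) (K : Set (Fin n → ℝ)) (hK : IsCompact K)
    (hconv : Convex ℝ K) (A : Fin m → Fin n → ℝ) (b : Fin m → ℝ) :
    K ∩ {x | ∀ i, ∑ j, A i j * x j ≤ b i} = ∅ ↔
      ∃ lam : Fin m → ℝ, (∀ i, 0 ≤ lam i) ∧
        ∀ x ∈ K, 0 < ∑ i, lam i * ((∑ j, A i j * x j) - b i) := by
  constructor
  · intro hempty
    rcases Set.eq_empty_or_nonempty K with hKe | hKne
    · exact ⟨0, fun i => le_rfl, fun x hx => by
        rw [hKe] at hx; exact absurd hx (Set.notMem_empty x)⟩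
    set P : Set (Fin n → ℝ) := {x | ∀ i, ∑ j, A i j * x j ≤ b i} with hPdef
    have hlin : ∀ i, IsLinearMap ℝ (fun x : Fin n → ℝ => ∑ j, A i j * x j) := fun i =>
      ⟨fun x y => by
          simp only [Pi.add_apply, mul_add, Finset.sum_add_distrib],
       fun a x => by
          simp only [Pi.smul_apply, smul_eq_mul, Finset.mul_sum]
          exact Finset.sum_congr rfl fun j _ => by ring⟩
    have hPiInter : P = ⋂ i, {x : Fin n → ℝ | ∑ j, A i j * x j ≤ b i} := by
      ext x; simp [hPdef, Set.mem_iInter]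
    have hPconv : Convex ℝ P := by
      rw [hPiInter]
      exact convex_iInter fun i => convex_halfSpace_le (hlin i) (b i)
    have hPclosed : IsClosed P := by
      rw [hPiInter]
      exact isClosed_iInter fun i => isClosed_le
        (continuous_finset_sum _ fun j _ => continuous_const.mul (continuous_apply j))
        continuous_const
    obtain ⟨f, u, v, hfK, huv, hfP⟩ :=
      geometric_hahn_banach_compact_closed hconv hK hPconv hPclosed
        (Set.disjoint_iff_inter_eq_empty.mpr hempty)
    set c : Fin n → ℝ := fun j => f fun p => if j = p then 1 else 0 with hc
    have hf_eq : ∀ x : Fin n → ℝ, f x = ∑ j, c j * x j := by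
      intro x
      have h := LinearMap.pi_apply_eq_sum_univ (f : (Fin n → ℝ) →ₗ[ℝ] ℝ) x
      simpa [hc, smul_eq_mul, mul_comm] using h
    -- generators of the Farkas cone in ℝ^{n+1}
    let row : Fin m → EuclideanSpace ℝ (Fin (n+1)) := fun i => toEuc (Fin.snoc (A i) (b i))
    let evec : EuclideanSpace ℝ (Fin (n+1)) := toEuc (Fin.snoc (fun _ => (0:ℝ)) 1)
    let g : Fin (m+1) → EuclideanSpace ℝ (Fin (n+1)) := Fin.snoc row evec
    have hpair : ∀ (q : Fin n → ℝ) (r : ℝ) (w : EuclideanSpace ℝ (Fin (n+1))),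
        ⟪toEuc (Fin.snoc q r), w⟫
          = ∑ j, q j * w (Fin.castSucc j) + r * w (Fin.last n) := by
      intro q r w
      rw [PiLp.inner_apply, Fin.sum_univ_castSucc]
      simp [RCLike.inner_apply, Fin.snoc_castSucc, Fin.snoc_last, mul_comm]
    -- the key consequence of membership in the cone
    have hmem_case : ∀ (qz : Fin n → ℝ) (r : ℝ),
        toEuc (Fin.snoc qz r) ∈ coneSet g →
        ∃ lam : Fin m → ℝ, (∀ i, 0 ≤ lam i) ∧ ∀ x : Fin n → ℝ,
          (∑ j, qz j * x j) - r ≤ ∑ i, lam i * ((∑ j, A i j * x j) - b i) := by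
      rintro qz r ⟨l, hl, hsum⟩
      refine ⟨fun i => l (Fin.castSucc i), fun i => hl _, fun x => ?_⟩
      set xh : EuclideanSpace ℝ (Fin (n+1)) := toEuc (Fin.snoc x (-1)) with hxh
      have h1 : ⟪toEuc (Fin.snoc qz r), xh⟫
          = (∑ j, qz j * x j) - r := by
        rw [hpair]
        simp [hxh, Fin.snoc_castSucc, Fin.snoc_last]
        ring
      have h2 : ⟪toEuc (Fin.snoc qz r), xh⟫
          = ∑ i, l i * ⟪g i, xh⟫ := by
        rw [← hsum, sum_inner]
        exact Finset.sum_congr rfl fun i _ => real_inner_smul_left _ _ _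
      have hrow : ∀ i : Fin m, ⟪g (Fin.castSucc i), xh⟫
          = (∑ j, A i j * x j) - b i := by
        intro i
        have : g (Fin.castSucc i) = toEuc (Fin.snoc (A i) (b i)) := by
          simp [g, row, Fin.snoc_castSucc]
        rw [this, hpair]
        simp [hxh, Fin.snoc_castSucc, Fin.snoc_last]
        ring
      have hev : ⟪g (Fin.last m), xh⟫ = -1 := by
        have : g (Fin.last m) = toEuc (Fin.snoc (fun _ => (0:ℝ)) 1) := by
          simp [g, evec, Fin.snoc_last]
        rw [this, hpair]
        simp [hxh, Fin.snoc_last]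
      rw [h1] at h2
      rw [Fin.sum_univ_castSucc] at h2
      simp only [hrow, hev] at h2
      have hll : 0 ≤ l (Fin.last m) := hl _
      linarith [h2]
    -- the key consequence of non-membership in the cone
    have hsep_case : ∀ (qz : Fin n → ℝ) (r : ℝ),
        toEuc (Fin.snoc qz r) ∉ coneSet g →
        ∃ (u' : Fin n → ℝ) (t : ℝ), 0 ≤ t ∧
          (∀ i, 0 ≤ (∑ j, A i j * u' j) + b i * t) ∧
          (∑ j, qz j * u' j) + r * t < 0 := by
      intro qz r hz
      obtain ⟨y, hy1, hy2⟩ := coneSet_sep g _ hz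
      refine ⟨fun j => y (Fin.castSucc j), y (Fin.last n), ?_, ?_, ?_⟩
      · have := hy1 (Fin.last m)
        have hgl : g (Fin.last m) = evec := Fin.snoc_last _ _
        rw [hgl] at this
        rw [Fin.sum_univ_castSucc] at this
        simpa [evec, Fin.snoc_castSucc, Fin.snoc_last] using this
      · intro i
        have := hy1 (Fin.castSucc i)
        have hgi : g (Fin.castSucc i) = row i := Fin.snoc_castSucc _ _ _
        rw [hgi] at this
        rw [Fin.sum_univ_castSucc] at this
        simpa [row, Fin.snoc_castSucc, Fin.snoc_last] using this
      · rw [Fin.sum_univ_castSucc] at hy2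
        simpa [Fin.snoc_castSucc, Fin.snoc_last] using hy2
    rcases Set.eq_empty_or_nonempty P with hPe | hPne
    · -- P is empty : use target (0, -1)
      by_cases hzC : toEuc (Fin.snoc (fun _ => (0:ℝ)) (-1)) ∈ coneSet g
      · obtain ⟨lam, hlam, hineq⟩ := hmem_case (fun _ => 0) (-1) hzC
        refine ⟨lam, hlam, fun x _ => ?_⟩
        have := hineq x
        simp only [zero_mul, Finset.sum_const_zero] at this
        linarith
      · obtain ⟨u', t, ht0, hrows, hneg⟩ := hsep_case (fun _ => 0) (-1) hzC
        simp only [zero_mul, Finset.sum_const_zero, zero_add, neg_mul, one_mul] at hneg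
        have htpos : 0 < t := by linarith
        exfalso
        have hxP : (fun j => -u' j / t) ∈ P := by
          intro i
          have h := hrows i
          have : ∑ j, A i j * (-u' j / t) = (-(∑ j, A i j * u' j)) / t := by
            rw [← Finset.sum_neg_distrib, Finset.sum_div]
            exact Finset.sum_congr rfl fun j _ => by ring
          rw [this, div_le_iff₀ htpos]
          nlinarith
        rw [hPe] at hxP
        exact Set.notMem_empty _ hxP
    · -- P nonempty : use target (-c, -v)
      by_cases hzC : toEuc (Fin.snoc (fun j => -c j) (-v)) ∈ coneSet g
      · obtain ⟨lam, hlam, hineq⟩ := hmem_case (fun j => -c j) (-v) hzC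
        refine ⟨lam, hlam, fun x hx => ?_⟩
        have h := hineq x
        have hfx : f x < u := hfK x hx
        have hfc : f x = ∑ j, c j * x j := hf_eq x
        have : ∑ j, -c j * x j = -∑ j, c j * x j := by
          simp [neg_mul]
        rw [this] at h
        linarith
      · exfalso
        obtain ⟨u', t, ht0, hrows, hneg⟩ := hsep_case (fun j => -c j) (-v) hzC
        have hsneg : ∑ j, -c j * u' j = -∑ j, c j * u' j := by simp [neg_mul]
        rw [hsneg] at hneg
        set s : ℝ := ∑ j, c j * u' j with hs
        by_cases htpos : 0 < t
        · have hxP : (fun j => -u' j / t) ∈ P := by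
            intro i
            have h := hrows i
            have : ∑ j, A i j * (-u' j / t) = (-(∑ j, A i j * u' j)) / t := by
              rw [← Finset.sum_neg_distrib, Finset.sum_div]
              exact Finset.sum_congr rfl fun j _ => by ring
            rw [this, div_le_iff₀ htpos]
            nlinarith
          have hvf := hfP _ hxP
          rw [hf_eq] at hvf
          have : ∑ j, c j * (-u' j / t) = (-s) / t := by
            rw [hs, ← Finset.sum_neg_distrib, Finset.sum_div]
            exact Finset.sum_congr rfl fun j _ => by ring
          rw [this, lt_div_iff₀ htpos] at hvf
          nlinarith
        · have hteq : t = 0 := le_antisymm (not_lt.1 htpos) ht0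
          have hspos : 0 < s := by rw [hteq] at hneg; linarith
          obtain ⟨x₀, hx₀⟩ := hPne
          set sc : ℝ := (f x₀ - v) / s with hsc
          have hfx₀ : v < f x₀ := hfP x₀ hx₀
          have hscpos : 0 < sc := div_pos (by linarith) hspos
          have hx₁P : (x₀ - sc • u') ∈ P := by
            intro i
            have hAu : 0 ≤ ∑ j, A i j * u' j := by
              have h := hrows i; rw [hteq] at h; linarith
            have hexp : ∑ j, A i j * (x₀ - sc • u') j
                = (∑ j, A i j * x₀ j) - sc * ∑ j, A i j * u' j := by
              rw [Finset.mul_sum, ← Finset.sum_sub_distrib]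
              exact Finset.sum_congr rfl fun j _ => by
                simp [Pi.sub_apply, Pi.smul_apply, smul_eq_mul]; ring
            rw [hexp]
            have := hx₀ i
            nlinarith
          have hvf := hfP _ hx₁P
          have hfval : f (x₀ - sc • u') = f x₀ - sc * s := by
            rw [map_sub, map_smul, smul_eq_mul, hf_eq u', hs]
          rw [hfval, hsc] at hvf
          have : (f x₀ - v) / s * s = f x₀ - v := div_mul_cancel₀ _ (ne_of_gt hspos)
          rw [this] at hvf
          linarith
  · rintro ⟨lam, hlam, hpos⟩
    rw [Set.eq_empty_iff_forall_notMem]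
    rintro x ⟨hxK, hxP⟩
    have h1 := hpos x hxK
    have h2 : ∑ i, lam i * ((∑ j, A i j * x j) - b i) ≤ 0 :=
      Finset.sum_nonpos fun i _ => by
        have := hlam i
        have := sub_nonpos.mpr (hxP i)
        nlinarith
    linarith
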